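/- Let c > 0, let λ, μ : [0,∞) → ℝ be continuous with λ(t) ≥ λ₀ > 0 for all t, and suppose there is η > 0 with μ(t)/λ(t) ≥ c + η for all t ≥ 0. Let x : [0,∞) → ℝ be differentiable with x'(t) = λ(t)(x(t) − μ(t)/λ(t))(x(t) − c) for all t ≥ 0 and x(0) ∈ [0, c]. Then x(t) ∈ [0, c] for all t, x is nondecreasing, and x(t) → c as t → ∞. -/

import Mathlib

open Set Filter

/-- Case 2 of Theorem 3.2: for the nonautonomous SIS ODE
`x' = λ(t) (x − μ(t)/λ(t)) (x − c)` with `λ(t) ≥ λ₀ > 0` and `μ(t)/λ(t) ≥ c + η`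
for all `t`, every trajectory starting in `[0, c]` stays in `[0, c]`, is
nondecreasing, and converges to `c`. -/
theorem stmt_10 (c : ℝ) (hc : 0 < c) (lam mu : ℝ → ℝ)
    (hlamc : Continuous lam) (hmuc : Continuous mu)
    (lam₀ : ℝ) (hlam₀ : 0 < lam₀) (hlam : ∀ t : ℝ, lam₀ ≤ lam t)
    (η : ℝ) (hη : 0 < η)
    (hratio : ∀ t ≥ (0 : ℝ), c + η ≤ mu t / lam t)
    (x : ℝ → ℝ)
    (hx : ∀ t ≥ (0 : ℝ),
      HasDerivAt x (lam t * (x t - mu t / lam t) * (x t - c)) t)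
    (hx0 : x 0 ∈ Icc (0 : ℝ) c) :
    (∀ t ≥ (0 : ℝ), x t ∈ Icc (0 : ℝ) c) ∧
    MonotoneOn x (Ici (0 : ℝ)) ∧
    Tendsto x atTop (nhds c) := by
  have hy : Continuous (fun t : ℝ => x (max t 0)) := by
    rw [continuous_iff_continuousAt]
    intro t
    exact ContinuousAt.comp (g := x) (f := fun s : ℝ => max s 0)
      (hx (max t 0) (le_max_right _ _)).continuousAt
      ((continuous_id.max continuous_const).continuousAt)
  have hcont : ContinuousOn x (Ici (0 : ℝ)) := fun t ht =>
    (hx t ht).continuousAt.continuousWithinAt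
  -- Step 1: upper bound x t ≤ c
  have hub : ∀ t ≥ (0 : ℝ), x t ≤ c := by
    intro T hT
    by_contra hxT
    push_neg at hxT
    set S1 : Set ℝ := Icc (0 : ℝ) T ∩ (fun t : ℝ => x (max t 0)) ⁻¹' Iic c with hS1
    have hS1c : IsClosed S1 := isClosed_Icc.inter (isClosed_Iic.preimage hy)
    have h0S1 : (0 : ℝ) ∈ S1 := ⟨⟨le_rfl, hT⟩, by simpa using hx0.2⟩
    have hbdd : BddAbove S1 := ⟨T, fun t ht => ht.1.2⟩
    set s0 := sSup S1 with hs0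
    have hs0mem : s0 ∈ S1 := hS1c.csSup_mem ⟨0, h0S1⟩ hbdd
    have hs0T : s0 ≤ T := hs0mem.1.2
    have hs00 : (0 : ℝ) ≤ s0 := hs0mem.1.1
    have hxs0 : x s0 ≤ c := by
      have h := hs0mem.2
      simpa [max_eq_left hs00] using h
    have hgt : ∀ t, s0 < t → t ≤ T → c < x t := by
      intro t h1 h2
      by_contra hle
      push_neg at hle
      have ht0 : (0 : ℝ) ≤ t := hs00.trans h1.le
      have : t ∈ S1 := ⟨⟨ht0, h2⟩, by simpa [max_eq_left ht0] using hle⟩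
      exact absurd (le_csSup hbdd this) (not_le.mpr h1)
    have hs0T' : s0 < T := by
      rcases lt_or_eq_of_le hs0T with h | h
      · exact h
      · exact absurd hxs0 (by rw [h]; linarith)
    set ε := min η (x T - c) with hε
    have hεpos : 0 < ε := lt_min hη (by linarith)
    have hεη : ε ≤ η := min_le_left _ _
    set S2 : Set ℝ := Icc s0 T ∩ (fun t : ℝ => x (max t 0)) ⁻¹' Ici (c + ε) with hS2
    have hS2c : IsClosed S2 := isClosed_Icc.inter (isClosed_Ici.preimage hy)
    have hTS2 : T ∈ S2 := by
      refine ⟨⟨hs0T, le_rfl⟩, ?_⟩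
      have h := min_le_right η (x T - c)
      simp only [mem_preimage, mem_Ici, max_eq_left hT]
      linarith
    have hbdd2 : BddBelow S2 := ⟨s0, fun t ht => ht.1.1⟩
    set s1 := sInf S2 with hs1
    have hs1mem : s1 ∈ S2 := hS2c.csInf_mem ⟨T, hTS2⟩ hbdd2
    have hs1lo : s0 ≤ s1 := hs1mem.1.1
    have hs1T : s1 ≤ T := hs1mem.1.2
    have hs10 : (0 : ℝ) ≤ s1 := hs00.trans hs1lo
    have hxs1 : c + ε ≤ x s1 := by
      have h := hs1mem.2
      simpa [max_eq_left hs10] using h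
    have hlt : ∀ t, s0 ≤ t → t < s1 → x t < c + ε := by
      intro t h1 h2
      by_contra hle
      push_neg at hle
      have ht0 : (0 : ℝ) ≤ t := hs00.trans h1
      have : t ∈ S2 := ⟨⟨h1, h2.le.trans hs1T⟩, by simpa [max_eq_left ht0] using hle⟩
      exact absurd (csInf_le hbdd2 this) (not_le.mpr h2)
    have hanti : AntitoneOn x (Icc s0 s1) := by
      apply antitoneOn_of_deriv_nonpos (convex_Icc _ _)
        (hcont.mono (fun t ht => hs00.trans ht.1))
      · rw [interior_Icc]
        intro t ht
        exact (hx t (hs00.trans ht.1.le)).differentiableAt.differentiableWithinAt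
      · rw [interior_Icc]
        intro t ht
        have ht0 : (0 : ℝ) ≤ t := hs00.trans ht.1.le
        rw [(hx t ht0).deriv]
        have h1 : c < x t := hgt t ht.1 (ht.2.le.trans hs1T)
        have h2 : x t < c + ε := hlt t ht.1.le ht.2
        have hr := hratio t ht0
        have hlt0 : lam t * (x t - mu t / lam t) ≤ 0 :=
          mul_nonpos_of_nonneg_of_nonpos (le_trans hlam₀.le (hlam t)) (by linarith)
        exact mul_nonpos_of_nonpos_of_nonneg hlt0 (by linarith)
    have := hanti (left_mem_Icc.mpr hs1lo) (right_mem_Icc.mpr hs1lo) hs1lo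
    linarith
  -- Step 2: monotone on Ici 0
  have hmono : MonotoneOn x (Ici (0 : ℝ)) := by
    apply monotoneOn_of_deriv_nonneg (convex_Ici 0) hcont
    · rw [interior_Ici]
      intro t ht
      exact (hx t (le_of_lt ht)).differentiableAt.differentiableWithinAt
    · rw [interior_Ici]
      intro t ht
      have ht0 : (0 : ℝ) ≤ t := le_of_lt ht
      rw [(hx t ht0).deriv]
      have hr := hratio t ht0
      have hu := hub t ht0
      have h2 : 0 ≤ lam t * (mu t / lam t - x t) * (c - x t) :=
        mul_nonneg (mul_nonneg (le_trans hlam₀.le (hlam t)) (by linarith)) (by linarith)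
      have heq : lam t * (x t - mu t / lam t) * (x t - c)
          = lam t * (mu t / lam t - x t) * (c - x t) := by ring
      linarith
  have hlb : ∀ t ≥ (0 : ℝ), 0 ≤ x t := fun t ht =>
    hx0.1.trans (hmono (self_mem_Ici) (mem_Ici.mpr ht) ht)
  -- Step 3: convergence
  set g : ℝ → ℝ := fun t => x (max t 0) with hg
  have hgmono : Monotone g := fun a b hab =>
    hmono (mem_Ici.mpr (le_max_right a 0)) (mem_Ici.mpr (le_max_right b 0))
      (max_le_max hab le_rfl)
  have hgbdd : BddAbove (range g) := by
    refine ⟨c, ?_⟩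
    rintro _ ⟨t, rfl⟩
    exact hub _ (le_max_right _ _)
  have htendg : Tendsto g atTop (nhds (⨆ t, g t)) := tendsto_atTop_ciSup hgmono hgbdd
  set L := ⨆ t, g t with hL
  have hxg : g =ᶠ[atTop] x := by
    filter_upwards [eventually_ge_atTop (0 : ℝ)] with t ht
    simp [hg, max_eq_left ht]
  have htendx : Tendsto x atTop (nhds L) := htendg.congr' hxg
  have hLlec : L ≤ c := ciSup_le (fun t => hub _ (le_max_right _ _))
  have hxleL : ∀ t ≥ (0 : ℝ), x t ≤ L := by
    intro t ht
    have := le_ciSup hgbdd t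
    simpa [hg, max_eq_left ht] using this
  have hLc : L = c := by
    by_contra hne
    have hLlt : L < c := lt_of_le_of_ne hLlec hne
    set δ := lam₀ * η * (c - L) with hδ
    have hδpos : 0 < δ := mul_pos (mul_pos hlam₀ hη) (sub_pos.mpr hLlt)
    have hderiv : ∀ t ≥ (0 : ℝ), δ ≤ lam t * (x t - mu t / lam t) * (x t - c) := by
      intro t ht
      have hxtL : x t ≤ L := hxleL t ht
      have hr := hratio t ht
      have h1 : η ≤ mu t / lam t - x t := by linarith
      have hA : lam₀ * η ≤ lam t * (mu t / lam t - x t) :=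
        mul_le_mul (hlam t) h1 hη.le (le_trans hlam₀.le (hlam t))
      have hB : lam₀ * η * (c - L) ≤ lam t * (mu t / lam t - x t) * (c - x t) :=
        mul_le_mul hA (by linarith) (by linarith)
          (le_trans (mul_pos hlam₀ hη).le hA)
      have heq : lam t * (x t - mu t / lam t) * (x t - c)
          = lam t * (mu t / lam t - x t) * (c - x t) := by ring
      linarith
    have hhmono : MonotoneOn (fun s => x s - δ * s) (Ici (0 : ℝ)) := by
      apply monotoneOn_of_deriv_nonneg (convex_Ici 0)
        (hcont.sub (Continuous.continuousOn (by continuity)))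
      · rw [interior_Ici]
        intro t ht
        exact ((hx t (le_of_lt ht)).sub
          (by simpa using (hasDerivAt_id t).const_mul δ)).differentiableAt.differentiableWithinAt
      · rw [interior_Ici]
        intro t ht
        have hD : HasDerivAt (fun s => x s - δ * s)
            (lam t * (x t - mu t / lam t) * (x t - c) - δ) t :=
          (hx t (le_of_lt ht)).sub (by simpa using (hasDerivAt_id t).const_mul δ)
        change 0 ≤ deriv (fun s => x s - δ * s) t
        rw [hD.deriv]
        have := hderiv t (le_of_lt ht)
        linarith
    have h1 : 0 ≤ (c - x 0) / δ := div_nonneg (by linarith [hx0.2]) hδpos.le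
    have hT0 : (0 : ℝ) ≤ (c - x 0) / δ + 1 := by linarith
    have hkey := hhmono (self_mem_Ici) (mem_Ici.mpr hT0) hT0
    have hμ : δ * ((c - x 0) / δ + 1) = (c - x 0) + δ := by
      field_simp
    have hxTc := hub _ hT0
    simp only at hkey
    linarith
  rw [hLc] at htendx
  exact ⟨fun t ht => ⟨hlb t ht, hub t ht⟩, hmono, htendx⟩
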